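/- For a = 2/3, the Möbius map f(x) = (−x − 1/3)/x on ℚ ∪ {∞} is globally 6-periodic: f⁶ = id, and f² ≠ id, f³ ≠ id. Consequently the Lyness map F_{2/3} has continua of 12-periodic points. -/

import Mathlib

/-- The Lyness map `F_a(x,y) = (y, (a+y)/x)`. -/
def lyness (a : ℚ) (p : ℚ × ℚ) : ℚ × ℚ := (p.2, (a + p.2) / p.1)

private lemma lyness_step (u : ℚ) (hu : u ≠ 0) (hu1 : u + 1 ≠ 0) :
    lyness (2/3) (lyness (2/3) (u, -u - 1))
      = ((-u - 1/3)/u, -((-u - 1/3)/u) - 1) := by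
  have hden : (-u - 1 : ℚ) ≠ 0 := fun hc => hu1 (by linarith)
  simp only [lyness, Prod.mk.injEq]
  constructor
  · ring_nf
  · rw [div_eq_iff hden]
    field_simp
    ring

/-- For `a = 2/3`, the Möbius map `f(x) = (-x - 1/3)/x` on `ℚ ∪ {∞}`, represented
by the matrix `!![-1, -1/3; 1, 0]`, is globally 6-periodic (`f⁶ = id`, i.e. the
sixth power of the matrix is a nonzero scalar matrix, and `f² ≠ id`, `f³ ≠ id`).
Consequently every point of the line `x + y + 1 = 0` with all iterates of
`F_{2/3}` defined is a 12-periodic point of the Lyness map `F_{2/3}`. -/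
theorem mobius_six_periodic :
    (∃ k : ℚ, k ≠ 0 ∧ (!![-1, -1/3; 1, 0] : Matrix (Fin 2) (Fin 2) ℚ) ^ 6
        = k • (1 : Matrix (Fin 2) (Fin 2) ℚ)) ∧
    (¬ ∃ k : ℚ, (!![-1, -1/3; 1, 0] : Matrix (Fin 2) (Fin 2) ℚ) ^ 2
        = k • (1 : Matrix (Fin 2) (Fin 2) ℚ)) ∧
    (¬ ∃ k : ℚ, (!![-1, -1/3; 1, 0] : Matrix (Fin 2) (Fin 2) ℚ) ^ 3
        = k • (1 : Matrix (Fin 2) (Fin 2) ℚ)) ∧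
    (∀ x y : ℚ, x + y + 1 = 0 →
      (∀ n, n < 12 → ((lyness (2/3))^[n] (x, y)).1 ≠ 0) →
      (lyness (2/3))^[12] (x, y) = (x, y)) := by
  refine ⟨⟨-1/27, by norm_num, ?_⟩, ?_, ?_, ?_⟩
  · ext i j
    fin_cases i <;> fin_cases j <;>
      norm_num [pow_succ, Matrix.mul_apply, Fin.sum_univ_two, Matrix.one_apply]
  · rintro ⟨k, hk⟩
    have := congrArg (fun M => M 1 0) hk
    norm_num [pow_succ, Matrix.mul_apply, Fin.sum_univ_two, Matrix.one_apply] at this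
  · rintro ⟨k, hk⟩
    have := congrArg (fun M => M 1 0) hk
    norm_num [pow_succ, Matrix.mul_apply, Fin.sum_univ_two, Matrix.one_apply] at this
  · intro x y hline h
    have hy : y = -x - 1 := by linarith
    subst hy
    have h0 : x ≠ 0 := by simpa using h 0 (by norm_num)
    have h1 : x + 1 ≠ 0 := by
      have := h 1 (by norm_num)
      simp [lyness] at this
      intro hc; exact this (by linarith)
    -- u1
    set u1 : ℚ := (-x - 1/3)/x with hu1def
    have e2 : (lyness (2/3))^[2] (x, -x - 1) = (u1, -u1 - 1) :=
      lyness_step x h0 h1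
    have h2 : u1 ≠ 0 := by
      have := h 2 (by norm_num); rw [e2] at this; exact this
    have h3 : u1 + 1 ≠ 0 := by
      have := h 3 (by norm_num)
      rw [show ((lyness (2/3))^[3] (x, -x - 1))
        = lyness (2/3) ((lyness (2/3))^[2] (x, -x - 1)) from rfl, e2] at this
      simp [lyness] at this
      intro hc; exact this (by linarith)
    have n1 : 3*x + 1 ≠ 0 := by
      intro hc
      apply h2
      rw [hu1def]
      field_simp
      linarith
    -- u2
    set u2 : ℚ := (-2*x - 1)/(3*x + 1) with hu2def
    have eu2 : (-u1 - 1/3)/u1 = u2 := by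
      rw [hu1def, hu2def, div_eq_div_iff]
      · field_simp; ring
      · intro hc; apply h2; rw [hu1def, hc]
      · exact n1
    have e4 : (lyness (2/3))^[4] (x, -x - 1) = (u2, -u2 - 1) := by
      rw [show (lyness (2/3))^[4] (x, -x - 1)
        = (lyness (2/3))^[2] ((lyness (2/3))^[2] (x, -x - 1)) from rfl, e2, ← eu2]
      exact lyness_step u1 h2 h3
    have h4 : u2 ≠ 0 := by
      have := h 4 (by norm_num); rw [e4] at this; exact this
    have h5 : u2 + 1 ≠ 0 := by
      have := h 5 (by norm_num)
      rw [show ((lyness (2/3))^[5] (x, -x - 1))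
        = lyness (2/3) ((lyness (2/3))^[4] (x, -x - 1)) from rfl, e4] at this
      simp [lyness] at this
      intro hc; exact this (by linarith)
    have n2 : 2*x + 1 ≠ 0 := by
      intro hc
      apply h4
      rw [hu2def]
      field_simp
      · rw [div_eq_zero_iff]; left; linarith
    -- u3
    set u3 : ℚ := (-3*x - 2)/(6*x + 3) with hu3def
    have n2' : (6:ℚ)*x + 3 ≠ 0 := by intro hc; apply n2; linarith
    have eu3 : (-u2 - 1/3)/u2 = u3 := by
      rw [hu2def, hu3def, div_eq_div_iff]
      · linear_combination (2*x+1) * mul_inv_cancel₀ n1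
      · intro hc; apply h4; rw [hu2def, hc]
      · exact n2'
    have e6 : (lyness (2/3))^[6] (x, -x - 1) = (u3, -u3 - 1) := by
      rw [show (lyness (2/3))^[6] (x, -x - 1)
        = (lyness (2/3))^[2] ((lyness (2/3))^[4] (x, -x - 1)) from rfl, e4, ← eu3]
      exact lyness_step u2 h4 h5
    have h6 : u3 ≠ 0 := by
      have := h 6 (by norm_num); rw [e6] at this; exact this
    have h7 : u3 + 1 ≠ 0 := by
      have := h 7 (by norm_num)
      rw [show ((lyness (2/3))^[7] (x, -x - 1))
        = lyness (2/3) ((lyness (2/3))^[6] (x, -x - 1)) from rfl, e6] at this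
      simp [lyness] at this
      intro hc; exact this (by linarith)
    have n3 : 3*x + 2 ≠ 0 := by
      intro hc
      apply h6
      rw [hu3def]
      field_simp
      · rw [div_eq_zero_iff]; left; linarith
    -- u4
    set u4 : ℚ := (-x - 1)/(3*x + 2) with hu4def
    have eu4 : (-u3 - 1/3)/u3 = u4 := by
      rw [hu3def, hu4def, div_eq_div_iff]
      · linear_combination ((3*x+2)/3) * mul_inv_cancel₀ n2'
      · intro hc; apply h6; rw [hu3def, hc]
      · exact n3
    have e8 : (lyness (2/3))^[8] (x, -x - 1) = (u4, -u4 - 1) := by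
      rw [show (lyness (2/3))^[8] (x, -x - 1)
        = (lyness (2/3))^[2] ((lyness (2/3))^[6] (x, -x - 1)) from rfl, e6, ← eu4]
      exact lyness_step u3 h6 h7
    have h8 : u4 ≠ 0 := by
      have := h 8 (by norm_num); rw [e8] at this; exact this
    have h9 : u4 + 1 ≠ 0 := by
      have := h 9 (by norm_num)
      rw [show ((lyness (2/3))^[9] (x, -x - 1))
        = lyness (2/3) ((lyness (2/3))^[8] (x, -x - 1)) from rfl, e8] at this
      simp [lyness] at this
      intro hc; exact this (by linarith)
    -- u5
    set u5 : ℚ := (-1)/(3*x + 3) with hu5def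
    have n4 : (3:ℚ)*x + 3 ≠ 0 := by intro hc; apply h1; linarith
    have eu5 : (-u4 - 1/3)/u4 = u5 := by
      rw [hu4def, hu5def, div_eq_div_iff]
      · linear_combination (x+1) * mul_inv_cancel₀ n3
      · intro hc; apply h8; rw [hu4def, hc]
      · exact n4
    have e10 : (lyness (2/3))^[10] (x, -x - 1) = (u5, -u5 - 1) := by
      rw [show (lyness (2/3))^[10] (x, -x - 1)
        = (lyness (2/3))^[2] ((lyness (2/3))^[8] (x, -x - 1)) from rfl, e8, ← eu5]
      exact lyness_step u4 h8 h9
    have h10 : u5 ≠ 0 := by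
      have := h 10 (by norm_num); rw [e10] at this; exact this
    have h11 : u5 + 1 ≠ 0 := by
      have := h 11 (by norm_num)
      rw [show ((lyness (2/3))^[11] (x, -x - 1))
        = lyness (2/3) ((lyness (2/3))^[10] (x, -x - 1)) from rfl, e10] at this
      simp [lyness] at this
      intro hc; exact this (by linarith)
    -- close the loop
    have eu6 : (-u5 - 1/3)/u5 = x := by
      rw [hu5def, div_eq_iff]
      · field_simp; ring
      · intro hc; apply h10; rw [hu5def, hc]
    rw [show (lyness (2/3))^[12] (x, -x - 1)
      = (lyness (2/3))^[2] ((lyness (2/3))^[10] (x, -x - 1)) from rfl, e10]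
    have hfin := lyness_step u5 h10 h11
    rw [eu6] at hfin
    exact hfin
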